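/- Let E be a Hausdorff locally convex space over ℝ in which every bounded subset is totally bounded. Then every absolutely convex (convex and balanced) subset of E which is compact for the weak topology σ(E,E') is compact for the original topology of E. Consequently, the topology of uniform convergence on absolutely convex compact subsets of E and the topology of uniform convergence on absolutely convex weakly compact subsets of E coincide on the dual E' (the Arens dual and the Mackey dual of E agree). -/

import Mathlib

open Filter Topology Set Bornology Pointwise

/-- A sequence in a locally convex space is *Mackey-Cauchy* if there are a bounded
absolutely convex set `B` and a double sequence of nonnegative reals `c` tending to `0`
such that `x n - x m ∈ c n m • B` for all `n, m`. -/
def MackeyCauchy (E : Type*) [AddCommGroup E] [Module ℝ E] [TopologicalSpace E]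
    (x : ℕ → E) : Prop :=
  ∃ (B : Set E) (c : ℕ → ℕ → ℝ),
    IsVonNBounded ℝ B ∧ Convex ℝ B ∧ Balanced ℝ B ∧
    (∀ n m, 0 ≤ c n m) ∧
    Tendsto (fun p : ℕ × ℕ => c p.1 p.2) atTop (𝓝 (0 : ℝ)) ∧
    ∀ n m, x n - x m ∈ c n m • B

/-- A locally convex space is *Mackey-complete* if every Mackey-Cauchy sequence converges. -/
def MackeyComplete (E : Type*) [AddCommGroup E] [Module ℝ E] [TopologicalSpace E] : Prop :=
  ∀ x : ℕ → E, MackeyCauchy E x → ∃ l : E, Tendsto x atTop (𝓝 l)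

/-- A locally convex space is *k-quasi-complete* if the closed absolutely convex hull of
every compact set is compact. -/
def KQuasiComplete (E : Type*) [AddCommGroup E] [Module ℝ E] [TopologicalSpace E] : Prop :=
  ∀ K : Set E, IsCompact K → IsCompact (closure (convexHull ℝ (balancedHull ℝ K)))

variable (E : Type*) [AddCommGroup E] [Module ℝ E] [TopologicalSpace E]

/-- The Arens dual `E'_c`: the topological dual with the topology of uniform convergence on
absolutely convex compact subsets of `E`. -/
abbrev ArensDual : Type _ :=
  UniformConvergenceCLM (RingHom.id ℝ) ℝ {K : Set E | Convex ℝ K ∧ Balanced ℝ K ∧ IsCompact K}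

/-- The Mackey dual `E'_μ`: the topological dual with the topology of uniform convergence on
absolutely convex weakly compact subsets of `E`. -/
abbrev MackeyDual : Type _ :=
  UniformConvergenceCLM (RingHom.id ℝ) ℝ
    {K : Set E | Convex ℝ K ∧ Balanced ℝ K ∧ IsCompact (⇑(toWeakSpace ℝ E) '' K)}

/-- The Schwartz ε-product `E ε F`: continuous linear maps from the Arens dual `E'_c` to `F`,
with the topology of uniform convergence on equicontinuous subsets of `E'`. -/
abbrev EpsProduct (F : Type*) [AddCommGroup F] [Module ℝ F] [TopologicalSpace F]
    [IsTopologicalAddGroup F] : Type _ :=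
  UniformConvergenceCLM (RingHom.id ℝ) F
    {H : Set (ArensDual E) | Equicontinuous fun f : H => (f.1 : E → ℝ)}

/-- The η-product `E η F`: continuous linear maps from the Mackey dual `E'_μ` to `F`,
with the topology of uniform convergence on equicontinuous subsets of `E'`. -/
abbrev EtaProduct (F : Type*) [AddCommGroup F] [Module ℝ F] [TopologicalSpace F]
    [IsTopologicalAddGroup F] : Type _ :=
  UniformConvergenceCLM (RingHom.id ℝ) F
    {H : Set (MackeyDual E) | Equicontinuous fun f : H => (f.1 : E → ℝ)}

section Aux

open scoped Uniformity

variable {E₀ : Type*} [AddCommGroup E₀] [Module ℝ E₀] [UniformSpace E₀] [IsUniformAddGroup E₀]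
    [ContinuousSMul ℝ E₀] [LocallyConvexSpace ℝ E₀] [T2Space E₀]

private instance : ContinuousSMul ℝ (WeakSpace ℝ E₀) :=
  inferInstanceAs (ContinuousSMul ℝ (WeakBilin (topDualPairing ℝ E₀).flip))

private lemma weak_t2 : T2Space (WeakSpace ℝ E₀) := by
  constructor
  intro x y hxy
  obtain ⟨f, hf⟩ := geometric_hahn_banach_point_point
    (x := (toWeakSpace ℝ E₀).symm x) (y := (toWeakSpace ℝ E₀).symm y)
    (fun h => hxy (by simpa using congrArg (toWeakSpace ℝ E₀) h))
  have hcont : Continuous fun z : WeakSpace ℝ E₀ => f ((toWeakSpace ℝ E₀).symm z) :=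
    WeakBilin.eval_continuous ((topDualPairing ℝ E₀).flip) f
  exact separated_by_continuous hcont hf.ne

/-- Closed convex sets are weakly closed. -/
private lemma image_isClosed_of_convex {s : Set E₀} (hs : Convex ℝ s) (hcl : IsClosed s) :
    IsClosed (⇑(toWeakSpace ℝ E₀) '' s) := by
  have h := hs.toWeakSpace_closure (𝕜 := ℝ)
  rw [hcl.closure_eq] at h
  rw [h]
  exact isClosed_closure

/-- Closed absolutely convex neighborhood basis. -/
private lemma exists_closed_absconvex_nhds {V : Set E₀} (hV : V ∈ 𝓝 (0 : E₀)) :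
    ∃ W ∈ 𝓝 (0 : E₀), IsClosed W ∧ Convex ℝ W ∧ Balanced ℝ W ∧ W ⊆ V := by
  obtain ⟨V₁, hV₁, hV₁c, hV₁V⟩ := exists_mem_nhds_isClosed_subset hV
  obtain ⟨U, ⟨hU, hUb, hUc⟩, hUV⟩ := (nhds_hasBasis_absConvex ℝ E₀).mem_iff.mp hV₁
  exact ⟨closure U, mem_of_superset hU subset_closure, isClosed_closure, hUc.closure,
    hUb.closure, (closure_minimal hUV hV₁c).trans hV₁V⟩

/-- Absolutely convex weakly compact sets are von Neumann bounded (a special case of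
Mackey's theorem, proved via Baire category on the weakly compact set). -/
private lemma isVonNBounded_of_weaklyCompact {K : Set E₀} (hKcv : Convex ℝ K)
    (hKb : Balanced ℝ K) (hK : IsCompact (⇑(toWeakSpace ℝ E₀) '' K)) :
    IsVonNBounded ℝ K := by
  rcases K.eq_empty_or_nonempty with rfl | hKne
  · exact Bornology.isVonNBounded_empty ℝ E₀
  intro V hV
  obtain ⟨W, hW0, hWcl, hWcv, hWb, hWV⟩ := exists_closed_absconvex_nhds hV
  refine Absorbs.mono_left ?_ hWV
  -- It suffices to find `c > 0` with `K ⊆ c • W`.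
  suffices hsuff : ∃ c : ℝ, 0 < c ∧ K ⊆ c • W by
    obtain ⟨c, hc, hKc⟩ := hsuff
    refine absorbs_iff_norm.mpr ⟨c, fun a ha => hKc.trans (hWb.smul_mono ?_)⟩
    rw [Real.norm_of_nonneg hc.le]
    exact ha
  set T := toWeakSpace ℝ E₀ with hT
  set K' : Set (WeakSpace ℝ E₀) := ⇑T '' K with hK'
  haveI : T2Space (WeakSpace ℝ E₀) := weak_t2
  haveI : CompactSpace K' := isCompact_iff_compactSpace.mp hK
  haveI : Nonempty K' := Nonempty.to_subtype (hKne.image _)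
  -- the closed sets covering `K'`
  set F : ℕ → Set K' := fun m =>
    Subtype.val ⁻¹' (⇑T '' (((m : ℝ) + 1) • W)) with hF
  have hFcl : ∀ m, IsClosed (F m) := by
    intro m
    refine IsClosed.preimage continuous_subtype_val ?_
    refine image_isClosed_of_convex (hWcv.smul _) ?_
    exact hWcl.smul_of_ne_zero (by positivity)
  have hFcover : ⋃ m, F m = univ := by
    refine eq_univ_of_forall fun z => mem_iUnion.mpr ?_
    obtain ⟨e, heK, heT⟩ := z.2
    have habs : Absorbs ℝ W {e} := absorbent_nhds_zero hW0 e
    obtain ⟨r, hr⟩ := absorbs_iff_norm.mp habs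
    set a : ℝ := max r 1
    have ha : e ∈ a • W := by
      have := hr a (by rw [Real.norm_of_nonneg (le_max_of_le_right zero_le_one)]; exact le_max_left _ _)
      exact this rfl
    refine ⟨⌈a⌉₊, ?_⟩
    have hsub : a • W ⊆ ((⌈a⌉₊ : ℝ) + 1) • W := by
      refine hWb.smul_mono ?_
      rw [Real.norm_of_nonneg (by positivity), Real.norm_of_nonneg (by positivity)]
      exact (Nat.le_ceil a).trans (by linarith)
    exact Set.mem_preimage.mpr ⟨e, hsub ha, heT⟩
  obtain ⟨m, x₀, hx₀⟩ := nonempty_interior_of_iUnion_of_closed hFcl hFcover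
  -- unpack the interior point
  rw [mem_interior_iff_mem_nhds, nhds_subtype_eq_comap, Filter.mem_comap] at hx₀
  obtain ⟨U, hU, hUF⟩ := hx₀
  obtain ⟨U', hU'U, hU'open, hx₀U'⟩ := mem_nhds_iff.mp hU
  set y₀ : WeakSpace ℝ E₀ := (x₀ : WeakSpace ℝ E₀)
  obtain ⟨e₀, he₀K, he₀T⟩ := x₀.2
  -- tube lemma: find a uniform δ
  have hg : Continuous fun p : ℝ × WeakSpace ℝ E₀ => y₀ + p.1 • (p.2 - y₀) := by
    apply Continuous.add continuous_const
    exact (continuous_fst.smul (continuous_snd.sub continuous_const))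
  have hsub : ({(0 : ℝ)} ×ˢ K') ⊆ (fun p : ℝ × WeakSpace ℝ E₀ => y₀ + p.1 • (p.2 - y₀)) ⁻¹' U' := by
    rintro ⟨t, z⟩ ⟨ht, _⟩
    simp only [Set.mem_singleton_iff] at ht
    subst ht
    simpa using hx₀U'
  obtain ⟨u, v, hu_open, _, h0u, hK'v, huv⟩ :=
    generalized_tube_lemma isCompact_singleton hK (hg.isOpen_preimage _ hU'open) hsub
  obtain ⟨ε, hε, hεu⟩ := Metric.mem_nhds_iff.mp (hu_open.mem_nhds (h0u rfl))
  set δ : ℝ := min (ε / 2) 1 with hδdef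
  have hδpos : 0 < δ := lt_min (by positivity) one_pos
  have hδ1 : δ ≤ 1 := min_le_right _ _
  have hδu : δ ∈ u := hεu (by
    simp only [Metric.mem_ball, Real.dist_eq, sub_zero]
    rw [abs_of_pos hδpos]
    exact lt_of_le_of_lt (min_le_left _ _) (by linarith))
  -- the set `C = (m+1) • W`
  set c₁ : ℝ := (m : ℝ) + 1 with hc₁
  have hc₁pos : (0 : ℝ) < c₁ := by positivity
  have hmem : ∀ z ∈ U' ∩ K', z ∈ ⇑T '' (c₁ • W) := by
    intro z hz
    have : (⟨z, hz.2⟩ : K') ∈ F m := hUF (hU'U hz.1)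
    exact this
  have he₀W : e₀ ∈ c₁ • W := by
    have : y₀ ∈ ⇑T '' (c₁ • W) := hmem y₀ ⟨hx₀U', x₀.2⟩
    obtain ⟨w, hw, hwT⟩ := this
    rwa [show w = e₀ from (toWeakSpace ℝ E₀).injective (hwT.trans he₀T.symm)] at hw
  refine ⟨c₁ + δ⁻¹ * (2 * c₁), by positivity, fun e heK => ?_⟩
  -- move `e` towards `e₀` by factor `δ` to land in `U' ∩ K'`
  have hz : T e ∈ K' := ⟨e, heK, rfl⟩
  have hδz : (δ, (T e : WeakSpace ℝ E₀)) ∈ u ×ˢ v := ⟨hδu, hK'v hz⟩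
  have hgU : y₀ + δ • ((T e : WeakSpace ℝ E₀) - y₀) ∈ U' := huv hδz
  set e' : E₀ := e₀ + δ • (e - e₀) with he'
  have he'T : (T e' : WeakSpace ℝ E₀) = y₀ + δ • ((T e : WeakSpace ℝ E₀) - y₀) := by
    rw [he', map_add, map_smul, map_sub, he₀T]
  have he'K : e' ∈ K := by
    have h := hKcv he₀K heK (by linarith : (0:ℝ) ≤ 1 - δ) hδpos.le (by ring)
    have heq : (1 - δ) • e₀ + δ • e = e' := by rw [he']; module
    rwa [heq] at h
  have he'W : e' ∈ c₁ • W := by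
    have : (T e' : WeakSpace ℝ E₀) ∈ ⇑T '' (c₁ • W) := by
      rw [he'T]
      exact hmem _ ⟨hgU, by rw [← he'T]; exact ⟨e', he'K, rfl⟩⟩
    obtain ⟨w, hw, hwT⟩ := this
    rwa [show w = e' from (toWeakSpace ℝ E₀).injective hwT] at hw
  -- now `e = e₀ + δ⁻¹ • (e' - e₀)`
  have hdiff : e' - e₀ ∈ (2 * c₁) • W := by
    have hneg : -e₀ ∈ c₁ • W := (hWb.smul _).neg_mem_iff.mpr he₀W
    have h1 : e' + -e₀ ∈ c₁ • W + c₁ • W := Set.add_mem_add he'W hneg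
    rw [← hWcv.add_smul hc₁pos.le hc₁pos.le, show c₁ + c₁ = 2 * c₁ by ring] at h1
    simpa [sub_eq_add_neg] using h1
  have he_eq : e = e₀ + δ⁻¹ • (e' - e₀) := by
    rw [he', add_sub_cancel_left, smul_smul, inv_mul_cancel₀ hδpos.ne', one_smul]
    abel
  rw [he_eq, hWcv.add_smul hc₁pos.le (by positivity)]
  refine Set.add_mem_add he₀W ?_
  rw [show (δ⁻¹ * (2 * c₁)) • W = δ⁻¹ • ((2 * c₁) • W) by rw [smul_smul]]
  exact Set.smul_mem_smul_set hdiff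

/-- Absolutely convex weakly compact sets are complete. -/
private lemma isComplete_of_weaklyCompact {K : Set E₀} (hKcv : Convex ℝ K)
    (hKb : Balanced ℝ K) (hK : IsCompact (⇑(toWeakSpace ℝ E₀) '' K)) :
    IsComplete K := by
  intro F hF hFK
  haveI : F.NeBot := hF.1
  set T := toWeakSpace ℝ E₀ with hT
  have hmap : Filter.map (⇑T) F ≤ 𝓟 (⇑T '' K) := by
    rw [← Filter.map_principal]
    exact Filter.map_mono hFK
  obtain ⟨y, hyK, hy⟩ := hK hmap
  obtain ⟨x, hxK, hxT⟩ := hyK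
  refine ⟨x, hxK, fun V hVx => ?_⟩
  -- translate to a neighborhood of 0
  have h0 : (fun w => x + w) ⁻¹' V ∈ 𝓝 (0 : E₀) := by
    have : Continuous fun w : E₀ => x + w := continuous_const.add continuous_id
    exact this.continuousAt (by simpa using hVx)
  obtain ⟨V₁, hV₁, hV₁sum⟩ := exists_nhds_zero_half h0
  obtain ⟨W, hW0, hWcl, hWcv, hWb, hWV₁⟩ := exists_closed_absconvex_nhds hV₁
  -- Cauchy: find `A ∈ F` with `A - A ⊆ W`
  have hWuni : (fun p : E₀ × E₀ => p.2 - p.1) ⁻¹' W ∈ 𝓤 E₀ := by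
    rw [uniformity_eq_comap_nhds_zero E₀]
    exact Filter.preimage_mem_comap hW0
  have hprod : (fun p : E₀ × E₀ => p.2 - p.1) ⁻¹' W ∈ F ×ˢ F := hF.2 hWuni
  obtain ⟨A, hA, B, hB, hAB⟩ := Filter.mem_prod_iff.mp hprod
  set A' := A ∩ B with hA'
  have hA'F : A' ∈ F := Filter.inter_mem hA hB
  obtain ⟨a₀, ha₀⟩ := Filter.nonempty_of_mem hA'F
  -- `x ∈ a₀ + W` since `a₀ + W` is weakly closed
  have hWmem : ∀ a ∈ A', a - a₀ ∈ W := by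
    intro a ha
    have hp : ((a₀, a) : E₀ × E₀) ∈ A ×ˢ B := ⟨ha₀.1, ha.2⟩
    exact hAB hp
  have hAW : A' ⊆ (fun w => a₀ + w) '' W := by
    intro a ha
    exact ⟨a - a₀, hWmem a ha, by module⟩
  have htrans_cv : Convex ℝ ((fun w => a₀ + w) '' W) := hWcv.translate a₀
  have htrans_cl : IsClosed ((fun w => a₀ + w) '' W) :=
    (Homeomorph.addLeft a₀).isClosedMap _ hWcl
  have hxmem : x ∈ (fun w => a₀ + w) '' W := by
    have hycl : y ∈ closure (⇑T '' A') := by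
      rw [mem_closure_iff_clusterPt]
      exact hy.mono (le_principal_iff.mpr (Filter.image_mem_map hA'F))
    have hclosed : IsClosed (⇑T '' ((fun w => a₀ + w) '' W)) :=
      image_isClosed_of_convex htrans_cv htrans_cl
    have hsub : closure (⇑T '' A') ⊆ ⇑T '' ((fun w => a₀ + w) '' W) :=
      closure_minimal (Set.image_mono hAW) hclosed
    obtain ⟨w, hw, hwT⟩ := hsub hycl
    rwa [show w = x from (toWeakSpace ℝ E₀).injective (hwT.trans hxT.symm)] at hw
  -- conclude: `A' ⊆ V`
  refine Filter.mem_of_superset hA'F fun a ha => ?_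
  obtain ⟨w₀, hw₀, hw₀eq⟩ := hxmem
  have haW : a - a₀ ∈ W := hWmem a ha
  have hxW : x - a₀ ∈ W := by rw [← hw₀eq]; simpa using hw₀
  have : a - x ∈ (fun w => x + w) ⁻¹' V := by
    have hneg : -(x - a₀) ∈ W := hWb.neg_mem_iff.mpr hxW
    have := hV₁sum _ (hWV₁ haW) _ (hWV₁ hneg)
    simpa [sub_eq_add_neg, add_comm, add_left_comm, add_assoc] using this
  simpa using this
  
end Aux

/-- In a Hausdorff locally convex space over `ℝ` in which every bounded set
is totally bounded, every absolutely convex weakly compact set is compact; consequently the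
Arens dual topology and the Mackey dual topology coincide on `E'`. -/
theorem isCompact_of_weaklyCompact_and_arens_eq_mackey
    {E : Type*} [AddCommGroup E] [Module ℝ E] [UniformSpace E] [IsUniformAddGroup E]
    [ContinuousSMul ℝ E] [LocallyConvexSpace ℝ E] [T2Space E]
    (hb : ∀ s : Set E, IsVonNBounded ℝ s → TotallyBounded s) :
    (∀ K : Set E, Convex ℝ K → Balanced ℝ K → IsCompact (⇑(toWeakSpace ℝ E) '' K) →
      IsCompact K) ∧
    ((inferInstanceAs (TopologicalSpace (ArensDual E)) : TopologicalSpace (E →L[ℝ] ℝ)) =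
      (inferInstanceAs (TopologicalSpace (MackeyDual E)) : TopologicalSpace (E →L[ℝ] ℝ))) := by
  have part1 : ∀ K : Set E, Convex ℝ K → Balanced ℝ K → IsCompact (⇑(toWeakSpace ℝ E) '' K) →
      IsCompact K := by
    intro K hKcv hKb hK
    rw [isCompact_iff_totallyBounded_isComplete]
    exact ⟨hb K (isVonNBounded_of_weaklyCompact hKcv hKb hK),
      isComplete_of_weaklyCompact hKcv hKb hK⟩
  refine ⟨part1, ?_⟩
  have hset : {K : Set E | Convex ℝ K ∧ Balanced ℝ K ∧ IsCompact K} =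
      {K : Set E | Convex ℝ K ∧ Balanced ℝ K ∧ IsCompact (⇑(toWeakSpace ℝ E) '' K)} := by
    ext K
    simp only [Set.mem_setOf_eq, and_congr_right_iff]
    intro hKcv hKb
    constructor
    · intro hK
      have hcont : Continuous (⇑(toWeakSpace ℝ E)) := by
        have := (toWeakSpaceCLM ℝ E).continuous
        convert this using 1
        exact rfl
      exact hK.image hcont
    · exact part1 K hKcv hKb
  change (inferInstance : TopologicalSpace (ArensDual E)) =
    (inferInstance : TopologicalSpace (MackeyDual E))
  unfold ArensDual MackeyDual
  rw [hset]
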